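/- Let 𝔸 ∈ C¹(ℝ,ℝ), a < b. For a feedforward network with activation 𝔸, architecture ℓ = (ℓ₀,…,ℓ_L) with ℓ₀ = d, ℓ_L = 1, and parameters θ, the gradient with respect to the parameters of the realization satisfies for all x ∈ [a,b]^d: ‖∇_θ N_θ(x)‖ ≤ max{1,|a|,|b|} · (3+|𝔸(0)|)^L · [max{ℓ₀,…,ℓ_{L−1}} · max{1, max_j |θ_j|} · max{1, sup_{x∈ℝ}|𝔸′(x)|}]^L. -/

import Mathlib

open MeasureTheory Finset

/-- Number of parameters used by the first `k` affine layers: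
`dk l k = ∑_{h=1}^{k} l_h (l_{h-1} + 1)`. -/
noncomputable def dk (l : ℕ → ℕ) (k : ℕ) : ℕ :=
  ∑ h ∈ Finset.range k, l (h + 1) * (l h + 1)

/-- Feedforward neural network with activation `A`, architecture `l`, parameters `θ`
(1-based indexing), input `x` (1-based indexing): `net A l θ x v i` is the output of
neuron `i` at layer `v`. -/
noncomputable def net (A : ℝ → ℝ) (l : ℕ → ℕ) (θ : ℕ → ℝ) (x : ℕ → ℝ) : ℕ → ℕ → ℝ
  | 0, i => x i
  | (v + 1), i =>
      θ (l (v + 1) * l v + i + dk l v) +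
      ∑ j ∈ Finset.Icc 1 (l v),
        θ ((i - 1) * l v + j + dk l v) *
          (if v = 0 then x j else A (net A l θ x v j))

/-- The ReLU activation function. -/
noncomputable def relu : ℝ → ℝ := fun x => max x 0

/-- Reinterpret a Euclidean vector as a 1-based-indexed input to a network. -/
noncomputable def toInput (d : ℕ) (x : EuclideanSpace ℝ (Fin d)) : ℕ → ℝ :=
  fun j => if h : 0 < j ∧ j ≤ d then x ⟨j - 1, by omega⟩ else 0

/-! ### Auxiliary material -/

lemma abs_coord_le_norm {n : ℕ} (u : EuclideanSpace ℝ (Fin n)) (i : Fin n) : |u i| ≤ ‖u‖ := by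
  rw [EuclideanSpace.norm_eq]
  rw [show |u i| = Real.sqrt (|u i| ^ 2) by rw [Real.sqrt_sq_eq_abs, abs_abs]]
  apply Real.sqrt_le_sqrt
  exact Finset.single_le_sum (f := fun j => ‖u j‖ ^ 2) (fun j _ => by positivity)
    (Finset.mem_univ i)

/-- The coordinate continuous linear map corresponding to `toInput`. -/
noncomputable def coordCLM (n : ℕ) (j : ℕ) : EuclideanSpace ℝ (Fin n) →L[ℝ] ℝ :=
  if h : 0 < j ∧ j ≤ n then EuclideanSpace.proj (⟨j - 1, by omega⟩ : Fin n) else 0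

lemma hasFDerivAt_toInput (n j : ℕ) (θ : EuclideanSpace ℝ (Fin n)) :
    HasFDerivAt (fun ψ : EuclideanSpace ℝ (Fin n) => toInput n ψ j) (coordCLM n j) θ := by
  unfold toInput coordCLM
  by_cases h : 0 < j ∧ j ≤ n
  · simp only [dif_pos h]
    exact (EuclideanSpace.proj (𝕜 := ℝ) (⟨j - 1, by omega⟩ : Fin n)).hasFDerivAt
  · simp only [dif_neg h]
    exact hasFDerivAt_const 0 θ

lemma abs_coordCLM_le (n j : ℕ) (u : EuclideanSpace ℝ (Fin n)) : |coordCLM n j u| ≤ ‖u‖ := by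
  unfold coordCLM
  by_cases h : 0 < j ∧ j ≤ n
  · simp only [dif_pos h]
    exact abs_coord_le_norm u _
  · simp only [dif_neg h]
    simpa using norm_nonneg u

/-- The candidate derivative (w.r.t. the parameter vector) of `net`. -/
noncomputable def netD (A : ℝ → ℝ) (l : ℕ → ℕ) (n : ℕ) (θ : EuclideanSpace ℝ (Fin n))
    (x : ℕ → ℝ) : ℕ → ℕ → (EuclideanSpace ℝ (Fin n) →L[ℝ] ℝ)
  | 0, _ => 0
  | (v + 1), i =>
      coordCLM n (l (v + 1) * l v + i + dk l v) +
      ∑ j ∈ Finset.Icc 1 (l v),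
        (toInput n θ ((i - 1) * l v + j + dk l v) •
            (deriv A (net A l (toInput n θ) x v j) • netD A l n θ x v j) +
          (if v = 0 then x j else A (net A l (toInput n θ) x v j)) •
            coordCLM n ((i - 1) * l v + j + dk l v))

lemma arith_fwd {M T Kb A0 Bv : ℝ} (hM : 1 ≤ M) (hT : 1 ≤ T) (hKb : 1 ≤ Kb) (hA0 : 0 ≤ A0)
    (hBv : 1 ≤ Bv) :
    T + M * (T * (A0 + Kb * Bv)) ≤ (3 + A0) * M * T * Kb * Bv := by
  nlinarith [mul_nonneg (mul_nonneg (le_trans zero_le_one hM) (le_trans zero_le_one hT)) hA0,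
    mul_nonneg (mul_nonneg (mul_nonneg (le_trans zero_le_one hM) (le_trans zero_le_one hT)) hA0)
      (sub_nonneg.2 (one_le_mul_of_one_le_of_one_le hKb hBv)),
    mul_nonneg (le_trans zero_le_one hT)
      (sub_nonneg.2 (one_le_mul_of_one_le_of_one_le hM (one_le_mul_of_one_le_of_one_le hKb hBv))),
    mul_nonneg (mul_nonneg (mul_nonneg (le_trans zero_le_one hM) (le_trans zero_le_one hT))
      (le_trans zero_le_one hKb)) (le_trans zero_le_one hBv)]

lemma arith_der {M T Kb A0 Bv : ℝ} (hM : 1 ≤ M) (hT : 1 ≤ T) (hKb : 1 ≤ Kb) (hA0 : 0 ≤ A0)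
    (hBv : 1 ≤ Bv) :
    1 + M * (T * (Kb * Bv) + (A0 + Kb * Bv)) ≤ (3 + A0) * M * T * Kb * Bv := by
  nlinarith [mul_nonneg (mul_nonneg (le_trans zero_le_one hM) hA0)
      (sub_nonneg.2 (one_le_mul_of_one_le_of_one_le hT (one_le_mul_of_one_le_of_one_le hKb hBv))),
    sub_nonneg.2 (one_le_mul_of_one_le_of_one_le hM (one_le_mul_of_one_le_of_one_le hT
      (one_le_mul_of_one_le_of_one_le hKb hBv))),
    mul_nonneg (mul_nonneg (le_trans zero_le_one hM) (le_trans zero_le_one hKb))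
      (mul_nonneg (le_trans zero_le_one hBv) (sub_nonneg.2 hT)),
    mul_nonneg (mul_nonneg (mul_nonneg (le_trans zero_le_one hM) (le_trans zero_le_one hT))
      (le_trans zero_le_one hKb)) (le_trans zero_le_one hBv)]

set_option maxHeartbeats 1600000 in
/-- a priori bound for the parameter-gradient of the realization.
For a `C¹` activation `A` with derivative bounded by `K`, the Euclidean norm of the
gradient of the realization with respect to the parameter vector satisfies the stated
explicit bound on `[a,b]^d`. -/
theorem gradient_param_bound
    (a b : ℝ) (hab : a < b)
    (A : ℝ → ℝ) (hA : ContDiff ℝ 1 A) (K : ℝ) (hK : ∀ x : ℝ, |deriv A x| ≤ K)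
    (d L : ℕ) (hd : 1 ≤ d) (hL : 1 ≤ L)
    (l : ℕ → ℕ) (hl0 : l 0 = d) (hlL : l L = 1) (hl : ∀ i, 1 ≤ l i)
    (θ : EuclideanSpace ℝ (Fin (dk l L)))
    (x : ℕ → ℝ) (hx : ∀ j ∈ Finset.Icc 1 d, x j ∈ Set.Icc a b) :
    ‖gradient
        (fun ψ : EuclideanSpace ℝ (Fin (dk l L)) => net A l (toInput (dk l L) ψ) x L 1) θ‖ ≤
      max 1 (max |a| |b|) * (3 + |A 0|) ^ L *
        ((Finset.fold max 0 (fun h => (l h : ℝ)) (Finset.range L)) *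
          max 1 (Finset.univ.fold max 0 (fun j : Fin (dk l L) => |θ j|)) *
          max 1 K) ^ L := by
  set aM : ℝ := max 1 (max |a| |b|) with haM
  set M : ℝ := Finset.fold max 0 (fun h => (l h : ℝ)) (Finset.range L) with hM
  set T : ℝ := max 1 (Finset.univ.fold max 0 (fun j : Fin (dk l L) => |θ j|)) with hT
  set Kb : ℝ := max 1 K with hKb
  set C : ℝ := 3 + |A 0| with hC
  set B : ℕ → ℝ := fun v => aM * (C * M * T * Kb) ^ v with hB
  -- basic facts
  have haM1 : 1 ≤ aM := le_max_left _ _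
  have hM1 : 1 ≤ M := by
    rw [hM]
    rw [Finset.le_fold_max]
    right
    exact ⟨0, Finset.mem_range.2 (by omega), by exact_mod_cast hl 0⟩
  have hT1 : 1 ≤ T := le_max_left _ _
  have hKb1 : 1 ≤ Kb := le_max_left _ _
  have hA0 : 0 ≤ |A 0| := abs_nonneg _
  have hC3 : (3 : ℝ) ≤ C := by rw [hC]; linarith
  have hCMTKb1 : 1 ≤ C * M * T * Kb := by
    calc (1 : ℝ) = 1 * 1 * 1 * 1 := by ring
    _ ≤ C * M * T * Kb := by
        gcongr <;> linarith
  have hB1 : ∀ v, 1 ≤ B v := fun v => by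
    calc (1 : ℝ) = 1 * 1 := by ring
    _ ≤ aM * (C * M * T * Kb) ^ v := by
        gcongr
        exact one_le_pow₀ hCMTKb1
  have hBsucc : ∀ v, B (v + 1) = C * M * T * Kb * B v := fun v => by
    rw [hB]; ring
  have hlM : ∀ v, v < L → (l v : ℝ) ≤ M := by
    intro v hv
    rw [hM, Finset.le_fold_max]
    right
    exact ⟨v, Finset.mem_range.2 hv, le_rfl⟩
  have hθT : ∀ p, |toInput (dk l L) θ p| ≤ T := by
    intro p
    unfold toInput
    by_cases h : 0 < p ∧ p ≤ (dk l L)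
    · simp only [dif_pos h]
      refine le_trans ?_ (le_max_right _ _)
      rw [Finset.le_fold_max]
      right
      exact ⟨⟨p - 1, by omega⟩, Finset.mem_univ _, le_rfl⟩
    · simp only [dif_neg h, abs_zero]
      linarith
  have hKKb : K ≤ Kb := le_max_right _ _
  have hxA : ∀ j, 1 ≤ j → j ≤ d → |x j| ≤ aM := by
    intro j h1 h2
    have := hx j (Finset.mem_Icc.2 ⟨h1, h2⟩)
    rw [haM]
    rcases abs_cases (x j) with ⟨he, _⟩ | ⟨he, _⟩
    · refine le_trans ?_ (le_max_right _ _)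
      rw [he]
      exact le_trans (this.2) (le_trans (le_abs_self b) (le_max_right _ _))
    · refine le_trans ?_ (le_max_right _ _)
      rw [he]
      exact le_trans (neg_le_neg this.1) (le_trans (neg_le_abs a) (le_max_left _ _))
  have hAdiff : Differentiable ℝ A := hA.differentiable one_ne_zero
  have hAlip : ∀ t : ℝ, |A t| ≤ |A 0| + K * |t| := by
    intro t
    have hK0 : 0 ≤ K := le_trans (abs_nonneg _) (hK 0)
    have hlip : LipschitzWith K.toNNReal A := by
      apply lipschitzWith_of_nnnorm_deriv_le hAdiff
      intro y
      rw [← NNReal.coe_le_coe]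
      simpa [Real.coe_toNNReal _ hK0] using hK y
    have := hlip.dist_le_mul t 0
    rw [Real.dist_eq, Real.dist_eq, sub_zero, Real.coe_toNNReal _ hK0] at this
    calc |A t| ≤ |A t - A 0| + |A 0| := by
          have := abs_sub_abs_le_abs_sub (A t) (A 0)
          linarith [abs_sub_abs_le_abs_sub (A t) (A 0)]
    _ ≤ |A 0| + K * |t| := by linarith
  -- the key induction
  have key : ∀ v, v ≤ L → ∀ i, 1 ≤ i → i ≤ l v →
      HasFDerivAt (fun ψ : EuclideanSpace ℝ (Fin (dk l L)) => net A l (toInput (dk l L) ψ) x v i)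
        (netD A l (dk l L) θ x v i) θ ∧
      (v < L → |net A l (toInput (dk l L) θ) x v i| ≤ B v) ∧
      (∀ u : EuclideanSpace ℝ (Fin (dk l L)), |netD A l (dk l L) θ x v i u| ≤ B v * ‖u‖) := by
    intro v
    induction v with
    | zero =>
      intro _ i h1 h2
      rw [hl0] at h2
      refine ⟨?_, ?_, ?_⟩
      · show HasFDerivAt (fun ψ : EuclideanSpace ℝ (Fin (dk l L)) => x i) (netD A l (dk l L) θ x 0 i) θ
        show HasFDerivAt (fun ψ : EuclideanSpace ℝ (Fin (dk l L)) => x i) 0 θ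
        exact hasFDerivAt_const _ _
      · intro _
        show |x i| ≤ B 0
        simpa [hB] using hxA i h1 h2
      · intro u
        show |(0 : EuclideanSpace ℝ (Fin (dk l L)) →L[ℝ] ℝ) u| ≤ B 0 * ‖u‖
        simp only [ContinuousLinearMap.zero_apply, abs_zero]
        positivity
    | succ v ih =>
      intro hvL i h1 h2
      have hvL' : v ≤ L := by omega
      have hvltL : v < L := by omega
      have hBv0 : (0:ℝ) ≤ B v := le_trans zero_le_one (hB1 v)
      have hKbBv0 : (0:ℝ) ≤ Kb * B v := mul_nonneg (by linarith) hBv0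
      have hGB0 : (0:ℝ) ≤ |A 0| + Kb * B v := by linarith
      have hfac0 : (0:ℝ) ≤ T * (|A 0| + Kb * B v) := mul_nonneg (by linarith) hGB0
      -- uniform bound on the "activation input" entering layer v+1
      have hgval : ∀ j, 1 ≤ j → j ≤ l v →
          |if v = 0 then x j else A (net A l (toInput (dk l L) θ) x v j)| ≤ |A 0| + Kb * B v := by
        intro j hj1 hj2
        by_cases hv : v = 0
        · subst hv
          rw [if_pos rfl]
          rw [hl0] at hj2
          have h1 := hxA j hj1 hj2
          have hB0e : B 0 = aM := by simp [hB]
          have : aM ≤ Kb * B 0 := by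
            rw [hB0e]
            nlinarith
          linarith
        · rw [if_neg hv]
          have hfw := ((ih hvL' j hj1 hj2).2.1) hvltL
          have := hAlip (net A l (toInput (dk l L) θ) x v j)
          have hK0 : 0 ≤ K := le_trans (abs_nonneg _) (hK 0)
          have hb0 : 0 ≤ B v := by linarith [hB1 v]
          have : K * |net A l (toInput (dk l L) θ) x v j| ≤ Kb * B v := by
            apply mul_le_mul hKKb hfw (abs_nonneg _) (by linarith)
          linarith [hAlip (net A l (toInput (dk l L) θ) x v j)]
      -- derivative of each summand
      have hterm : ∀ j ∈ Finset.Icc 1 (l v),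
          HasFDerivAt (fun ψ : EuclideanSpace ℝ (Fin (dk l L)) =>
              toInput (dk l L) ψ ((i - 1) * l v + j + dk l v) *
                (if v = 0 then x j else A (net A l (toInput (dk l L) ψ) x v j)))
            (toInput (dk l L) θ ((i - 1) * l v + j + dk l v) •
                (deriv A (net A l (toInput (dk l L) θ) x v j) • netD A l (dk l L) θ x v j) +
              (if v = 0 then x j else A (net A l (toInput (dk l L) θ) x v j)) •
                coordCLM (dk l L) ((i - 1) * l v + j + dk l v)) θ := by
        intro j hj
        rw [Finset.mem_Icc] at hj
        by_cases hv : v = 0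
        · subst hv
          simp only [if_pos rfl]
          have h0 : netD A l (dk l L) θ x 0 j = 0 := rfl
          rw [h0, smul_zero, smul_zero]
          simpa using
            (hasFDerivAt_toInput (dk l L) ((i - 1) * l 0 + j + dk l 0) θ).fun_mul
              (hasFDerivAt_const (x j) θ)
        · simp only [if_neg hv]
          have hfd := (ih hvL' j hj.1 hj.2).1
          have hAd : HasDerivAt A (deriv A (net A l (toInput (dk l L) θ) x v j))
              (net A l (toInput (dk l L) θ) x v j) :=
            (hAdiff (net A l (toInput (dk l L) θ) x v j)).hasDerivAt
          have hcomp := hAd.comp_hasFDerivAt θ hfd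
          exact (hasFDerivAt_toInput (dk l L) ((i - 1) * l v + j + dk l v) θ).mul hcomp
      refine ⟨?_, ?_, ?_⟩
      · -- HasFDerivAt at layer v+1
        have heq : (fun ψ : EuclideanSpace ℝ (Fin (dk l L)) => net A l (toInput (dk l L) ψ) x (v + 1) i) =
            fun ψ : EuclideanSpace ℝ (Fin (dk l L)) =>
              toInput (dk l L) ψ (l (v + 1) * l v + i + dk l v) +
              ∑ j ∈ Finset.Icc 1 (l v),
                toInput (dk l L) ψ ((i - 1) * l v + j + dk l v) *
                  (if v = 0 then x j else A (net A l (toInput (dk l L) ψ) x v j)) := by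
          funext ψ
          rw [net]
        rw [heq]
        show HasFDerivAt _
          (coordCLM (dk l L) (l (v + 1) * l v + i + dk l v) +
            ∑ j ∈ Finset.Icc 1 (l v),
              (toInput (dk l L) θ ((i - 1) * l v + j + dk l v) •
                  (deriv A (net A l (toInput (dk l L) θ) x v j) • netD A l (dk l L) θ x v j) +
                (if v = 0 then x j else A (net A l (toInput (dk l L) θ) x v j)) •
                  coordCLM (dk l L) ((i - 1) * l v + j + dk l v))) θ
        exact (hasFDerivAt_toInput (dk l L) (l (v + 1) * l v + i + dk l v) θ).add
          (HasFDerivAt.fun_sum hterm)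
      · -- forward bound at layer v+1
        intro hsvL
        have hsum : |∑ j ∈ Finset.Icc 1 (l v),
            toInput (dk l L) θ ((i - 1) * l v + j + dk l v) *
              (if v = 0 then x j else A (net A l (toInput (dk l L) θ) x v j))| ≤
            (l v : ℝ) * (T * (|A 0| + Kb * B v)) := by
          refine le_trans (Finset.abs_sum_le_sum_abs _ _) ?_
          have : ∀ j ∈ Finset.Icc 1 (l v),
              |toInput (dk l L) θ ((i - 1) * l v + j + dk l v) *
                (if v = 0 then x j else A (net A l (toInput (dk l L) θ) x v j))| ≤
              T * (|A 0| + Kb * B v) := by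
            intro j hj
            rw [Finset.mem_Icc] at hj
            rw [abs_mul]
            exact mul_le_mul (hθT _) (hgval j hj.1 hj.2) (abs_nonneg _) (by linarith)
          refine le_trans (Finset.sum_le_sum this) ?_
          rw [Finset.sum_const, nsmul_eq_mul]
          have hcard : (((Finset.Icc 1 (l v)).card : ℕ) : ℝ) = (l v : ℝ) := by
            rw [Nat.card_Icc]
            push_cast [Nat.add_sub_cancel]
            ring
          rw [hcard]
        have h1 : |net A l (toInput (dk l L) θ) x (v+1) i| ≤ T + (l v : ℝ) * (T * (|A 0| + Kb * B v)) := by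
          conv_lhs => rw [net]
          refine le_trans (abs_add_le _ _) ?_
          exact add_le_add (hθT _) hsum
        have h2 : (l v : ℝ) * (T * (|A 0| + Kb * B v)) ≤ M * (T * (|A 0| + Kb * B v)) := by
          exact mul_le_mul_of_nonneg_right (hlM v hvltL) hfac0
        have h3 := arith_fwd hM1 hT1 hKb1 hA0 (hB1 v)
        rw [hBsucc v, hC]
        linarith
      · -- derivative bound at layer v+1
        intro u
        have hD : netD A l (dk l L) θ x (v+1) i =
            coordCLM (dk l L) (l (v + 1) * l v + i + dk l v) +
            ∑ j ∈ Finset.Icc 1 (l v),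
              (toInput (dk l L) θ ((i - 1) * l v + j + dk l v) •
                  (deriv A (net A l (toInput (dk l L) θ) x v j) • netD A l (dk l L) θ x v j) +
                (if v = 0 then x j else A (net A l (toInput (dk l L) θ) x v j)) •
                  coordCLM (dk l L) ((i - 1) * l v + j + dk l v)) := rfl
        rw [hD]
        have happ : (coordCLM (dk l L) (l (v + 1) * l v + i + dk l v) +
            ∑ j ∈ Finset.Icc 1 (l v),
              (toInput (dk l L) θ ((i - 1) * l v + j + dk l v) •
                  (deriv A (net A l (toInput (dk l L) θ) x v j) • netD A l (dk l L) θ x v j) +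
                (if v = 0 then x j else A (net A l (toInput (dk l L) θ) x v j)) •
                  coordCLM (dk l L) ((i - 1) * l v + j + dk l v))) u =
            coordCLM (dk l L) (l (v + 1) * l v + i + dk l v) u +
            ∑ j ∈ Finset.Icc 1 (l v),
              (toInput (dk l L) θ ((i - 1) * l v + j + dk l v) *
                  (deriv A (net A l (toInput (dk l L) θ) x v j) * netD A l (dk l L) θ x v j u) +
                (if v = 0 then x j else A (net A l (toInput (dk l L) θ) x v j)) *
                  coordCLM (dk l L) ((i - 1) * l v + j + dk l v) u) := by
          rw [ContinuousLinearMap.add_apply, ContinuousLinearMap.sum_apply]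
          refine congrArg₂ (· + ·) rfl ?_
          refine Finset.sum_congr rfl fun j _ => ?_
          by_cases hv : v = 0 <;> simp [hv, smul_eq_mul]
        rw [happ]
        have hbnd : ∀ j ∈ Finset.Icc 1 (l v),
            |toInput (dk l L) θ ((i - 1) * l v + j + dk l v) *
                (deriv A (net A l (toInput (dk l L) θ) x v j) * netD A l (dk l L) θ x v j u) +
              (if v = 0 then x j else A (net A l (toInput (dk l L) θ) x v j)) *
                coordCLM (dk l L) ((i - 1) * l v + j + dk l v) u| ≤
            (T * (Kb * B v) + (|A 0| + Kb * B v)) * ‖u‖ := by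
          intro j hj
          rw [Finset.mem_Icc] at hj
          have hu0 : (0:ℝ) ≤ ‖u‖ := norm_nonneg u
          have e1 : |toInput (dk l L) θ ((i - 1) * l v + j + dk l v) *
              (deriv A (net A l (toInput (dk l L) θ) x v j) * netD A l (dk l L) θ x v j u)| ≤
              T * (Kb * (B v * ‖u‖)) := by
            rw [abs_mul, abs_mul]
            have hd1 : |deriv A (net A l (toInput (dk l L) θ) x v j)| ≤ Kb :=
              le_trans (hK _) hKKb
            have hd2 : |netD A l (dk l L) θ x v j u| ≤ B v * ‖u‖ := (ih hvL' j hj.1 hj.2).2.2 u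
            have : |deriv A (net A l (toInput (dk l L) θ) x v j)| * |netD A l (dk l L) θ x v j u| ≤
                Kb * (B v * ‖u‖) :=
              mul_le_mul hd1 hd2 (abs_nonneg _) (by linarith)
            exact mul_le_mul (hθT _) this (by positivity) (by linarith)
          have e2 : |(if v = 0 then x j else A (net A l (toInput (dk l L) θ) x v j)) *
              coordCLM (dk l L) ((i - 1) * l v + j + dk l v) u| ≤ (|A 0| + Kb * B v) * ‖u‖ := by
            rw [abs_mul]
            exact mul_le_mul (hgval j hj.1 hj.2) (abs_coordCLM_le _ _ _) (abs_nonneg _) hGB0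
          calc _ ≤ |toInput (dk l L) θ ((i - 1) * l v + j + dk l v) *
                (deriv A (net A l (toInput (dk l L) θ) x v j) * netD A l (dk l L) θ x v j u)| +
              |(if v = 0 then x j else A (net A l (toInput (dk l L) θ) x v j)) *
                coordCLM (dk l L) ((i - 1) * l v + j + dk l v) u| := abs_add_le _ _
          _ ≤ T * (Kb * (B v * ‖u‖)) + (|A 0| + Kb * B v) * ‖u‖ := add_le_add e1 e2
          _ = (T * (Kb * B v) + (|A 0| + Kb * B v)) * ‖u‖ := by ring
        have hsum2 : |∑ j ∈ Finset.Icc 1 (l v),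
            (toInput (dk l L) θ ((i - 1) * l v + j + dk l v) *
                (deriv A (net A l (toInput (dk l L) θ) x v j) * netD A l (dk l L) θ x v j u) +
              (if v = 0 then x j else A (net A l (toInput (dk l L) θ) x v j)) *
                coordCLM (dk l L) ((i - 1) * l v + j + dk l v) u)| ≤
            (l v : ℝ) * ((T * (Kb * B v) + (|A 0| + Kb * B v)) * ‖u‖) := by
          refine le_trans (Finset.abs_sum_le_sum_abs _ _) ?_
          refine le_trans (Finset.sum_le_sum hbnd) ?_
          rw [Finset.sum_const, nsmul_eq_mul]
          have hcard : (((Finset.Icc 1 (l v)).card : ℕ) : ℝ) = (l v : ℝ) := by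
            rw [Nat.card_Icc]
            push_cast [Nat.add_sub_cancel]
            ring
          rw [hcard]
        have hu0 : (0:ℝ) ≤ ‖u‖ := norm_nonneg u
        have hstep : (1 : ℝ) + M * (T * (Kb * B v) + (|A 0| + Kb * B v)) ≤
            (3 + |A 0|) * M * T * Kb * B v := arith_der hM1 hT1 hKb1 hA0 (hB1 v)
        have hlvM : (l v : ℝ) ≤ M := hlM v hvltL
        calc |coordCLM (dk l L) (l (v + 1) * l v + i + dk l v) u +
            ∑ j ∈ Finset.Icc 1 (l v),
              (toInput (dk l L) θ ((i - 1) * l v + j + dk l v) *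
                  (deriv A (net A l (toInput (dk l L) θ) x v j) * netD A l (dk l L) θ x v j u) +
                (if v = 0 then x j else A (net A l (toInput (dk l L) θ) x v j)) *
                  coordCLM (dk l L) ((i - 1) * l v + j + dk l v) u)| ≤
            ‖u‖ + (l v : ℝ) * ((T * (Kb * B v) + (|A 0| + Kb * B v)) * ‖u‖) :=
          le_trans (abs_add_le _ _) (add_le_add (abs_coordCLM_le _ _ _) hsum2)
        _ ≤ ‖u‖ + M * ((T * (Kb * B v) + (|A 0| + Kb * B v)) * ‖u‖) := by
            have h3 : (0:ℝ) ≤ T * (Kb * B v) := mul_nonneg (by linarith) hKbBv0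
            have h4 : (0:ℝ) ≤ (T * (Kb * B v) + (|A 0| + Kb * B v)) * ‖u‖ :=
              mul_nonneg (by linarith) hu0
            have h5 := mul_le_mul_of_nonneg_right (hlM v hvltL) h4
            linarith
        _ = (1 + M * (T * (Kb * B v) + (|A 0| + Kb * B v))) * ‖u‖ := by ring
        _ ≤ ((3 + |A 0|) * M * T * Kb * B v) * ‖u‖ := by gcongr
        _ = B (v + 1) * ‖u‖ := by rw [hBsucc, hC]
  -- conclude
  have hmain := key L le_rfl 1 le_rfl (by omega)
  have hfd := hmain.1
  have hnorm : ‖netD A l (dk l L) θ x L 1‖ ≤ B L := by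
    apply ContinuousLinearMap.opNorm_le_bound _ (by linarith [hB1 L])
    intro u
    rw [Real.norm_eq_abs]
    exact hmain.2.2 u
  have hgrad : ‖gradient
      (fun ψ : EuclideanSpace ℝ (Fin (dk l L)) => net A l (toInput (dk l L) ψ) x L 1) θ‖ =
      ‖fderiv ℝ (fun ψ : EuclideanSpace ℝ (Fin (dk l L)) => net A l (toInput (dk l L) ψ) x L 1) θ‖ := by
    rw [gradient]
    exact LinearIsometryEquiv.norm_map _ _
  rw [hgrad, hfd.fderiv]
  calc ‖netD A l (dk l L) θ x L 1‖ ≤ B L := hnorm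
  _ = aM * (C * M * T * Kb) ^ L := rfl
  _ = aM * C ^ L * (M * T * Kb) ^ L := by rw [mul_pow, mul_pow, mul_pow]; ring
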